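/- Let A3, A4, B2 be n×n real matrices. Let [l_x,u_x] ⊇ [l_x',u_x'] and [l_y,u_y] ⊇ [l_y',u_y'] be nested boxes in ℝⁿ, and let [l_w,u_w] be a box in ℝⁿ. Define 𝒴prior = Ψ(A3)[l_x,u_x] ⊕ Ψ(A4)[l_y,u_y] ⊕ Ψ(B2)[l_w,u_w] and 𝒴post = Ψ(A3)[l_x',u_x'] ⊕ Ψ(A4)[l_y',u_y'] ⊕ Ψ(B2)[l_w,u_w], with centers c_prior and c_post. Then the posterior surrogate volume is sandwiched as: Vol̄(𝒴prior) − ‖A3‖₁·(Vol̄([l_x,u_x]) − Vol̄([l_x',u_x'])) − ‖A4‖₁·(Vol̄([l_y,u_y]) − Vol̄([l_y',u_y'])) ≤ Vol̄(𝒴post) ≤ Vol̄(𝒴prior) − 2‖c_post − c_prior‖₁. -/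
import Mathlib


open Matrix Finset

/-- Entrywise absolute value of a matrix. -/
noncomputable def matAbs {n : ℕ} (A : Matrix (Fin n) (Fin n) ℝ) :
    Matrix (Fin n) (Fin n) ℝ := Matrix.of fun i j => |A i j|

/-- A⁺ = (A + |A|)/2. -/
noncomputable def matPos {n : ℕ} (A : Matrix (Fin n) (Fin n) ℝ) :
    Matrix (Fin n) (Fin n) ℝ := Matrix.of fun i j => (A i j + |A i j|) / 2

/-- A⁻ = (A − |A|)/2. -/
noncomputable def matNeg {n : ℕ} (A : Matrix (Fin n) (Fin n) ℝ) :
    Matrix (Fin n) (Fin n) ℝ := Matrix.of fun i j => (A i j - |A i j|) / 2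

/-- Lower endpoint of Ψ(A)[l,u]. -/
noncomputable def psiLo {n : ℕ} (A : Matrix (Fin n) (Fin n) ℝ) (l u : Fin n → ℝ) :
    Fin n → ℝ := (matPos A).mulVec l + (matNeg A).mulVec u

/-- Upper endpoint of Ψ(A)[l,u]. -/
noncomputable def psiHi {n : ℕ} (A : Matrix (Fin n) (Fin n) ℝ) (l u : Fin n → ℝ) :
    Fin n → ℝ := (matNeg A).mulVec l + (matPos A).mulVec u

/-- Surrogate volume of the box [l,u]: Σᵢ (u i − l i). -/
noncomputable def volBar {n : ℕ} (l u : Fin n → ℝ) : ℝ := ∑ i, (u i - l i)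

/-- 1-norm of a vector: Σᵢ |v i|. -/
noncomputable def norm1 {n : ℕ} (v : Fin n → ℝ) : ℝ := ∑ i, |v i|

/-- Entrywise 1-norm of a matrix: Σ_{i,j} |a_{ij}|. -/
noncomputable def mat1Norm {n : ℕ} (A : Matrix (Fin n) (Fin n) ℝ) : ℝ :=
  ∑ i, ∑ j, |A i j|


lemma center_aux {a b a' b' : ℝ} (h1 : a ≤ a') (h2 : b' ≤ b) :
    b' - a' ≤ b - a - 2 * |(a' + b') / 2 - (a + b) / 2| := by
  rcases abs_cases ((a' + b') / 2 - (a + b) / 2) with ⟨h, _⟩ | ⟨h, _⟩ <;> rw [h] <;> linarith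

lemma span_eq {n : ℕ} (A : Matrix (Fin n) (Fin n) ℝ) (l u : Fin n → ℝ) (i : Fin n) :
    psiHi A l u i - psiLo A l u i = ∑ j, |A i j| * (u j - l j) := by
  simp only [psiHi, psiLo, Pi.add_apply, Matrix.mulVec, dotProduct,
    matPos, matNeg, Matrix.of_apply]
  rw [← Finset.sum_add_distrib, ← Finset.sum_add_distrib, ← Finset.sum_sub_distrib]
  exact Finset.sum_congr rfl fun j _ => by ring

lemma psiLo_mono {n : ℕ} (A : Matrix (Fin n) (Fin n) ℝ) {l u l' u' : Fin n → ℝ}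
    (hl : l ≤ l') (hu : u' ≤ u) : psiLo A l u ≤ psiLo A l' u' := by
  intro i
  simp only [psiLo, Pi.add_apply, Matrix.mulVec, dotProduct,
    matPos, matNeg, Matrix.of_apply]
  refine add_le_add (Finset.sum_le_sum fun j _ => ?_) (Finset.sum_le_sum fun j _ => ?_)
  · exact mul_le_mul_of_nonneg_left (hl j) (by nlinarith [neg_abs_le (A i j)])
  · exact mul_le_mul_of_nonpos_left (hu j) (by nlinarith [le_abs_self (A i j)])

lemma psiHi_mono {n : ℕ} (A : Matrix (Fin n) (Fin n) ℝ) {l u l' u' : Fin n → ℝ}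
    (hl : l ≤ l') (hu : u' ≤ u) : psiHi A l' u' ≤ psiHi A l u := by
  intro i
  simp only [psiHi, Pi.add_apply, Matrix.mulVec, dotProduct,
    matPos, matNeg, Matrix.of_apply]
  refine add_le_add (Finset.sum_le_sum fun j _ => ?_) (Finset.sum_le_sum fun j _ => ?_)
  · exact mul_le_mul_of_nonpos_left (hl j) (by nlinarith [le_abs_self (A i j)])
  · exact mul_le_mul_of_nonneg_left (hu j) (by nlinarith [neg_abs_le (A i j)])

/-- Privacy-level sandwich bound (Lemma 4): the posterior surrogate volume is
bounded below by the prior volume minus the weighted uncertainty reductions,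
and above by the prior volume minus twice the 1-norm of the center shift. -/
theorem privacy_level_sandwich {n : ℕ}
    (A3 A4 B2 : Matrix (Fin n) (Fin n) ℝ)
    (lx ux lx' ux' ly uy ly' uy' lw uw : Fin n → ℝ)
    (hx₁ : lx ≤ lx') (hx₂ : ux' ≤ ux) (hx' : lx' ≤ ux')
    (hy₁ : ly ≤ ly') (hy₂ : uy' ≤ uy) (hy' : ly' ≤ uy')
    (hw : lw ≤ uw)
    (loPrior hiPrior loPost hiPost cPrior cPost : Fin n → ℝ)
    (hloPrior : loPrior = psiLo A3 lx ux + psiLo A4 ly uy + psiLo B2 lw uw)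
    (hhiPrior : hiPrior = psiHi A3 lx ux + psiHi A4 ly uy + psiHi B2 lw uw)
    (hloPost : loPost = psiLo A3 lx' ux' + psiLo A4 ly' uy' + psiLo B2 lw uw)
    (hhiPost : hiPost = psiHi A3 lx' ux' + psiHi A4 ly' uy' + psiHi B2 lw uw)
    (hcPrior : cPrior = (loPrior + hiPrior) / 2)
    (hcPost : cPost = (loPost + hiPost) / 2) :
    volBar loPrior hiPrior
        - mat1Norm A3 * (volBar lx ux - volBar lx' ux')
        - mat1Norm A4 * (volBar ly uy - volBar ly' uy')
      ≤ volBar loPost hiPost ∧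
    volBar loPost hiPost
      ≤ volBar loPrior hiPrior - 2 * norm1 (cPost - cPrior) := by
  subst hloPrior hhiPrior hloPost hhiPost hcPrior hcPost
  have hvol : ∀ (l1 u1 l2 u2 l3 u3 : Fin n → ℝ),
      volBar (psiLo A3 l1 u1 + psiLo A4 l2 u2 + psiLo B2 l3 u3)
             (psiHi A3 l1 u1 + psiHi A4 l2 u2 + psiHi B2 l3 u3)
      = (∑ i, ∑ j, |A3 i j| * (u1 j - l1 j)) + (∑ i, ∑ j, |A4 i j| * (u2 j - l2 j))
        + (∑ i, ∑ j, |B2 i j| * (u3 j - l3 j)) := by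
    intro l1 u1 l2 u2 l3 u3
    rw [volBar, ← Finset.sum_add_distrib, ← Finset.sum_add_distrib]
    refine Finset.sum_congr rfl fun i _ => ?_
    have h1 := span_eq A3 l1 u1 i
    have h2 := span_eq A4 l2 u2 i
    have h3 := span_eq B2 l3 u3 i
    simp only [Pi.add_apply] at *
    linarith
  constructor
  · -- lower bound
    rw [hvol, hvol]
    have key : ∀ (A : Matrix (Fin n) (Fin n) ℝ) (l u l' u' : Fin n → ℝ),
        l ≤ l' → u' ≤ u →
        (∑ i, ∑ j, |A i j| * (u j - l j)) - (∑ i, ∑ j, |A i j| * (u' j - l' j))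
          ≤ mat1Norm A * (volBar l u - volBar l' u') := by
      intro A l u l' u' hl hu
      have hd : ∀ j, 0 ≤ u j - l j - (u' j - l' j) := fun j => by
        have := hl j; have := hu j; simp only at *; linarith
      rw [← Finset.sum_sub_distrib]
      simp only [← Finset.sum_sub_distrib, ← mul_sub]
      calc ∑ i, ∑ j, |A i j| * (u j - l j - (u' j - l' j))
          ≤ ∑ i : Fin n, ∑ j, |A i j| * (∑ k, (u k - l k - (u' k - l' k))) := by
            refine Finset.sum_le_sum fun i _ => Finset.sum_le_sum fun j _ => ?_
            exact mul_le_mul_of_nonneg_left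
              (Finset.single_le_sum (fun k _ => hd k) (Finset.mem_univ j)) (abs_nonneg _)
        _ = mat1Norm A * (volBar l u - volBar l' u') := by
            rw [mat1Norm, volBar, volBar, ← Finset.sum_sub_distrib, Finset.sum_mul]
            exact Finset.sum_congr rfl fun i _ => (Finset.sum_mul _ _ _).symm
    have k3 := key A3 lx ux lx' ux' hx₁ hx₂
    have k4 := key A4 ly uy ly' uy' hy₁ hy₂
    linarith
  · -- upper bound
    have hlo : ∀ i, (psiLo A3 lx ux + psiLo A4 ly uy + psiLo B2 lw uw) i
        ≤ (psiLo A3 lx' ux' + psiLo A4 ly' uy' + psiLo B2 lw uw) i := fun i => by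
      have h1 := psiLo_mono A3 hx₁ hx₂ i
      have h2 := psiLo_mono A4 hy₁ hy₂ i
      simp only [Pi.add_apply]; linarith
    have hhi : ∀ i, (psiHi A3 lx' ux' + psiHi A4 ly' uy' + psiHi B2 lw uw) i
        ≤ (psiHi A3 lx ux + psiHi A4 ly uy + psiHi B2 lw uw) i := fun i => by
      have h1 := psiHi_mono A3 hx₁ hx₂ i
      have h2 := psiHi_mono A4 hy₁ hy₂ i
      simp only [Pi.add_apply]; linarith
    simp only [volBar, norm1, Finset.mul_sum]
    rw [← Finset.sum_sub_distrib]
    refine Finset.sum_le_sum fun i _ => ?_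
    have h1 := hlo i
    have h2 := hhi i
    simp only [Pi.sub_apply, Pi.div_apply, Pi.add_apply, Pi.ofNat_apply] at *
    exact center_aux h1 h2
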